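/- Let Γᵢ (i = 1,…,r) be groups with counting functions satisfying: there exist constants C > 0 and δᵢ > 0 such that for all sufficiently large R, (1/C)·e^{δᵢR} ≤ #{γᵢ ∈ Γᵢ : R−1 ≤ dᵢ(oᵢ,γᵢoᵢ) < R} ≤ #{γᵢ ∈ Γᵢ : dᵢ(oᵢ,γᵢoᵢ) < R} ≤ C·e^{δᵢR}. Let Γ = Γ₁ × ⋯ × Γ_r act on the ℓ²-product X with basepoint o = (o₁,…,o_r). Then for every unit vector θ = (θ₁,…,θ_r) ∈ ℝ_{≥0}^r, the exponent of growth δ_θ(Γ) := lim_{ε→0} limsup_{n→∞} (1/n)·log #{γ ∈ Γ : d(o,γo) < n, ‖H(o,γo)/d(o,γo) − θ‖ < ε} equals Σᵢ δᵢθᵢ. -/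

import Mathlib

open Filter

lemma dl7_coord {r : ℕ} (x : EuclideanSpace ℝ (Fin r)) (i : Fin r) : |x i| ≤ ‖x‖ := by
  rw [EuclideanSpace.norm_eq]
  have h1 : |x i| = Real.sqrt (‖x i‖ ^ 2) := by
    rw [Real.sqrt_sq_eq_abs, Real.norm_eq_abs, abs_abs]
  rw [h1]
  exact Real.sqrt_le_sqrt (Finset.single_le_sum (f := fun j => ‖x j‖ ^ 2)
    (fun j _ => sq_nonneg _) (Finset.mem_univ i))

lemma dl7_ballFinite {G X : Type*} [Group G] [MetricSpace X] [MulAction G X]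
    (hiso : ∀ (g : G) (x y : X), dist (g • x) (g • y) = dist x y) (o : X)
    (C δ R₀ : ℝ) (hC : 0 < C)
    (hann : ∀ R : ℝ, R₀ ≤ R → (1/C) * Real.exp (δ * R) ≤
      (Nat.card {g : G | R - 1 ≤ dist o (g • o) ∧ dist o (g • o) < R} : ℝ)) :
    ∀ R : ℝ, {g : G | dist o (g • o) < R}.Finite := by
  have hsub : ∀ g h : G, dist o ((g * h) • o) ≤ dist o (g • o) + dist o (h • o) := by
    intro g h
    calc dist o ((g * h) • o) ≤ dist o (g • o) + dist (g • o) ((g * h) • o) := dist_triangle _ _ _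
    _ = dist o (g • o) + dist o (h • o) := by
        rw [mul_smul, hiso g o (h • o)]
  have hinv : ∀ g : G, dist o (g⁻¹ • o) = dist o (g • o) := by
    intro g
    rw [← hiso g o (g⁻¹ • o), smul_inv_smul, dist_comm]
  have hAnn : ∀ R : ℝ, R₀ ≤ R →
      ({g : G | R - 1 ≤ dist o (g • o) ∧ dist o (g • o) < R}).Finite ∧
      ({g : G | R - 1 ≤ dist o (g • o) ∧ dist o (g • o) < R}).Nonempty := by
    intro R hR
    have h0 : (0:ℝ) < (Nat.card {g : G | R - 1 ≤ dist o (g • o) ∧ dist o (g • o) < R} : ℝ) :=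
      lt_of_lt_of_le (by positivity) (hann R hR)
    have h0' : 0 < Nat.card {g : G | R - 1 ≤ dist o (g • o) ∧ dist o (g • o) < R} := by
      exact_mod_cast h0
    obtain ⟨hne, hfin⟩ := Nat.card_pos_iff.mp h0'
    exact ⟨Set.finite_coe_iff.mp hfin, Set.nonempty_coe_sort.mp hne⟩
  have hSeg : ∀ a b : ℝ, R₀ ≤ a → ({g : G | a ≤ dist o (g • o) ∧ dist o (g • o) < b}).Finite := by
    intro a b ha
    have hcover : {g : G | a ≤ dist o (g • o) ∧ dist o (g • o) < b} ⊆
        ⋃ j ∈ Finset.range ⌈b - a⌉₊, {g : G | (a + j + 1) - 1 ≤ dist o (g • o) ∧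
          dist o (g • o) < a + j + 1} := by
      rintro g ⟨hg1, hg2⟩
      have hx0 : 0 ≤ dist o (g • o) - a := by linarith
      refine Set.mem_iUnion₂.mpr ⟨⌊dist o (g • o) - a⌋₊, ?_, ?_⟩
      · rw [Finset.mem_range, Nat.floor_lt hx0]
        exact lt_of_lt_of_le (by linarith) (Nat.le_ceil _)
      · constructor
        · have := Nat.floor_le hx0
          linarith
        · have := Nat.lt_floor_add_one (dist o (g • o) - a)
          linarith
    refine Set.Finite.subset ?_ hcover
    refine Set.Finite.biUnion (Finset.range _).finite_toSet (fun j _ => (hAnn (a + j + 1) ?_).1)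
    have : (0:ℝ) ≤ j := Nat.cast_nonneg j
    linarith
  set R₁ : ℝ := max R₀ 1 with hR₁def
  have hR₁1 : (1:ℝ) ≤ R₁ := le_max_right _ _
  have hR₁R₀ : R₀ ≤ R₁ := le_max_left _ _
  have hsmall : ({g : G | dist o (g • o) < R₁}).Finite := by
    obtain ⟨a, ha1, ha2⟩ := (hAnn (3 * R₁) (by linarith)).2
    refine Set.Finite.of_finite_image (f := fun b => a * b) ?_ ?_
    · refine Set.Finite.subset (hSeg R₁ (4 * R₁) hR₁R₀) ?_
      rintro x ⟨b, hb, rfl⟩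
      have hb' : dist o (b • o) < R₁ := hb
      constructor
      · have h1 : dist o (a • o) ≤ dist o ((a * b) • o) + dist o (b • o) := by
          have h2 := hsub (a * b) b⁻¹
          rw [mul_inv_cancel_right, hinv] at h2
          linarith
        simp only [Set.mem_setOf_eq] at ha1 ha2 ⊢
        linarith
      · have := hsub a b
        simp only [Set.mem_setOf_eq] at ha1 ha2 ⊢
        linarith
    · intro x _ y _ hxy
      exact mul_left_cancel hxy
  intro R
  have hcov : {g : G | dist o (g • o) < R} ⊆
      {g : G | dist o (g • o) < R₁} ∪ {g : G | R₁ ≤ dist o (g • o) ∧ dist o (g • o) < R} := by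
    intro g hg
    by_cases h : dist o (g • o) < R₁
    · exact Or.inl h
    · exact Or.inr ⟨le_of_not_gt h, hg⟩
  exact (hsmall.union (hSeg R₁ R hR₁R₀)).subset hcov

set_option maxHeartbeats 2000000 in
/-- For a product Γ = Γ₁ × ⋯ × Γ_r of groups with two-sided exponential orbit
counting bounds (critical exponents δᵢ), the exponent of growth of slope θ of
the product action on the ℓ²-product equals Σᵢ δᵢθᵢ. -/
theorem stmt7 (r : ℕ) (X : Fin r → Type*) [∀ i, MetricSpace (X i)]
    (G : Fin r → Type*) [∀ i, Group (G i)] [∀ i, Countable (G i)]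
    [∀ i, MulAction (G i) (X i)]
    (hiso : ∀ i (g : G i) (x y : X i), dist (g • x) (g • y) = dist x y)
    (o : ∀ i, X i) (C : ℝ) (hC : 0 < C) (δ : Fin r → ℝ) (hδ : ∀ i, 0 < δ i)
    (hcount : ∃ R₀ : ℝ, ∀ i, ∀ R : ℝ, R₀ ≤ R →
      (1 / C) * Real.exp (δ i * R) ≤
        (Nat.card {g : G i | R - 1 ≤ dist (o i) (g • o i) ∧
          dist (o i) (g • o i) < R} : ℝ) ∧
      (Nat.card {g : G i | dist (o i) (g • o i) < R} : ℝ) ≤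
        C * Real.exp (δ i * R))
    -- `H g` is the distance vector of the orbit point of `g` in the ℓ²-product
    (H : (∀ i, G i) → EuclideanSpace ℝ (Fin r))
    (hH : ∀ g i, H g i = dist (o i) (g i • o i)) :
    ∀ θ : EuclideanSpace ℝ (Fin r), ‖θ‖ = 1 → (∀ i, 0 ≤ θ i) →
      Tendsto (fun ε : ℝ =>
          limsup (fun n : ℕ =>
            Real.log (Nat.card {g : ∀ i, G i | H g ≠ 0 ∧ ‖H g‖ < (n : ℝ) ∧
              ‖(‖H g‖)⁻¹ • H g - θ‖ < ε}) / (n : ℝ)) atTop)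
        (nhdsWithin 0 (Set.Ioi 0)) (nhds (∑ i, δ i * θ i)) := by
  classical
  obtain ⟨R₀, hcount⟩ := hcount
  intro θ hθ hθ0
  set D : ℝ := ∑ i, δ i * θ i with hDdef
  have hθne : ∃ i₀, 0 < θ i₀ := by
    by_contra h
    push_neg at h
    have hz : θ = 0 := by
      ext i
      exact le_antisymm (h i) (hθ0 i)
    rw [hz, norm_zero] at hθ
    norm_num at hθ
  obtain ⟨i₀, hi₀⟩ := hθne
  have hD : 0 < D := Finset.sum_pos' (fun i _ => mul_nonneg (hδ i).le (hθ0 i))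
    ⟨i₀, Finset.mem_univ _, mul_pos (hδ i₀) hi₀⟩
  have hsd : 0 < ∑ i, δ i := Finset.sum_pos (fun i _ => hδ i) ⟨i₀, Finset.mem_univ _⟩
  have hball : ∀ i (R : ℝ), {g : G i | dist (o i) (g • o i) < R}.Finite := fun i =>
    dl7_ballFinite (hiso i) (o i) C (δ i) R₀ hC (fun R hR => (hcount i R hR).1)
  have hC1 : (1:ℝ) ≤ C := by
    have h := hcount i₀ (max R₀ 1) (le_max_left _ _)
    have hsub : {g : G i₀ | max R₀ 1 - 1 ≤ dist (o i₀) (g • o i₀) ∧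
        dist (o i₀) (g • o i₀) < max R₀ 1} ⊆
        {g : G i₀ | dist (o i₀) (g • o i₀) < max R₀ 1} := fun g hg => hg.2
    have hmono := Nat.card_mono (hball i₀ (max R₀ 1)) hsub
    have h2 : (1/C) * Real.exp (δ i₀ * max R₀ 1) ≤ C * Real.exp (δ i₀ * max R₀ 1) :=
      le_trans h.1 (le_trans (Nat.cast_le.mpr hmono) h.2)
    have hE := Real.exp_pos (δ i₀ * max R₀ 1)
    have h3 : 1/C ≤ C := le_of_mul_le_mul_right h2 hE
    rw [div_le_iff₀ hC] at h3
    nlinarith [h3, hC]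
  have hlogC : 0 ≤ Real.log C := Real.log_nonneg hC1
  set K₀ : ℝ := max R₀ 0 with hK₀def
  have hK₀ : 0 ≤ K₀ := le_max_right _ _
  have hballcard : ∀ i (R : ℝ), 0 ≤ R →
      (Nat.card {g : G i | dist (o i) (g • o i) < R} : ℝ) ≤ C * Real.exp (δ i * (R + K₀)) := by
    intro i R hR
    have h2 := (hcount i (max R R₀) (le_max_right _ _)).2
    have hmono : Nat.card {g : G i | dist (o i) (g • o i) < R} ≤
        Nat.card {g : G i | dist (o i) (g • o i) < max R R₀} :=
      Nat.card_mono (hball i _) (fun g hg =>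
        show dist (o i) (g • o i) < max R R₀ from lt_of_lt_of_le hg (le_max_left _ _))
    refine le_trans (le_trans (Nat.cast_le.mpr hmono) h2) ?_
    have hle : δ i * max R R₀ ≤ δ i * (R + K₀) := by
      refine mul_le_mul_of_nonneg_left ?_ (hδ i).le
      refine max_le (by linarith) ?_
      have : R₀ ≤ K₀ := le_max_left _ _
      linarith
    exact mul_le_mul_of_nonneg_left (Real.exp_le_exp.mpr hle) hC.le
  -- finiteness of the counting sets
  have hSfin : ∀ (ε : ℝ) (n : ℕ), ({g : ∀ i, G i | H g ≠ 0 ∧ ‖H g‖ < (n : ℝ) ∧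
      ‖(‖H g‖)⁻¹ • H g - θ‖ < ε}).Finite := by
    intro ε n
    refine (Set.Finite.pi (fun i => hball i n)).subset ?_
    rintro g ⟨hg0, hgn, -⟩
    rw [Set.mem_univ_pi]
    intro i
    show dist (o i) (g i • o i) < (n:ℝ)
    have h1 : dist (o i) (g i • o i) = H g i := (hH g i).symm
    have h2 : |H g i| ≤ ‖H g‖ := dl7_coord (H g) i
    have h3 : H g i ≤ |H g i| := le_abs_self _
    linarith
  -- upper bound
  have hupper : ∀ ε : ℝ, 0 < ε → ∀ n : ℕ, 1 ≤ n →
      Real.log (Nat.card {g : ∀ i, G i | H g ≠ 0 ∧ ‖H g‖ < (n : ℝ) ∧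
        ‖(‖H g‖)⁻¹ • H g - θ‖ < ε}) / (n : ℝ) ≤
      ((r : ℝ) * Real.log C + (∑ i, δ i) * K₀) / n + (D + ε * ∑ i, δ i) := by
    intro ε hε n hn
    have hn0 : (0:ℝ) < n := by exact_mod_cast hn
    have hsub : {g : ∀ i, G i | H g ≠ 0 ∧ ‖H g‖ < (n : ℝ) ∧
        ‖(‖H g‖)⁻¹ • H g - θ‖ < ε} ⊆
        Set.univ.pi (fun i => {g : G i | dist (o i) (g • o i) < (θ i + ε) * n}) := by
      rintro g ⟨hg0, hgn, hgd⟩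
      rw [Set.mem_univ_pi]
      intro i
      have hpos : 0 < ‖H g‖ := norm_pos_iff.mpr hg0
      have hcoord : |((‖H g‖)⁻¹ • H g - θ) i| ≤ ‖(‖H g‖)⁻¹ • H g - θ‖ := dl7_coord _ i
      have happ : ((‖H g‖)⁻¹ • H g - θ) i = (‖H g‖)⁻¹ * H g i - θ i := rfl
      have h1 : (‖H g‖)⁻¹ * H g i - θ i < ε := by
        have h := lt_of_le_of_lt hcoord hgd
        rw [happ] at h
        exact lt_of_le_of_lt (le_abs_self _) h
      rw [sub_lt_iff_lt_add] at h1
      have h2 : H g i < ‖H g‖ * (ε + θ i) := (inv_mul_lt_iff₀ hpos).mp h1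
      have hθε : 0 < θ i + ε := by have := hθ0 i; linarith
      show dist (o i) (g i • o i) < (θ i + ε) * n
      have hd : dist (o i) (g i • o i) = H g i := (hH g i).symm
      have h3 : ‖H g‖ * (ε + θ i) ≤ (θ i + ε) * n := by
        rw [mul_comm]
        have : (ε + θ i) * ‖H g‖ ≤ (ε + θ i) * n :=
          mul_le_mul_of_nonneg_left hgn.le (by linarith)
        calc (ε + θ i) * ‖H g‖ ≤ (ε + θ i) * n := this
        _ = (θ i + ε) * n := by ring
      linarith
    have hfinpi : (Set.univ.pi (fun i => {g : G i |
        dist (o i) (g • o i) < (θ i + ε) * n})).Finite := Set.Finite.pi (fun i => hball i _)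
    have hcard1 : (Nat.card {g : ∀ i, G i | H g ≠ 0 ∧ ‖H g‖ < (n : ℝ) ∧
        ‖(‖H g‖)⁻¹ • H g - θ‖ < ε} : ℝ) ≤
        ∏ i, (Nat.card {g : G i | dist (o i) (g • o i) < (θ i + ε) * n} : ℝ) := by
      have h1 := Nat.card_mono hfinpi hsub
      have h2 : Nat.card ↥(Set.univ.pi (fun i => {g : G i |
          dist (o i) (g • o i) < (θ i + ε) * n})) =
          ∏ i, Nat.card {g : G i | dist (o i) (g • o i) < (θ i + ε) * n} := by
        rw [Nat.card_congr (Equiv.Set.univPi _), Nat.card_pi]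
      rw [h2] at h1
      calc (Nat.card {g : ∀ i, G i | H g ≠ 0 ∧ ‖H g‖ < (n : ℝ) ∧
          ‖(‖H g‖)⁻¹ • H g - θ‖ < ε} : ℝ) ≤
          ((∏ i, Nat.card {g : G i | dist (o i) (g • o i) < (θ i + ε) * n} : ℕ) : ℝ) := by
            exact_mod_cast h1
      _ = ∏ i, (Nat.card {g : G i | dist (o i) (g • o i) < (θ i + ε) * n} : ℝ) := by
            push_cast; rfl
    have hcard2 : ∏ i, (Nat.card {g : G i | dist (o i) (g • o i) < (θ i + ε) * n} : ℝ) ≤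
        ∏ i, C * Real.exp (δ i * ((θ i + ε) * n + K₀)) :=
      Finset.prod_le_prod (fun i _ => Nat.cast_nonneg _)
        (fun i _ => hballcard i _ (mul_nonneg (by linarith [hθ0 i]) hn0.le))
    have hprod : ∏ i, C * Real.exp (δ i * ((θ i + ε) * n + K₀)) =
        C ^ r * Real.exp ((D + ε * ∑ i, δ i) * n + (∑ i, δ i) * K₀) := by
      rw [Finset.prod_mul_distrib, Finset.prod_const, ← Real.exp_sum]
      congr 1
      · rw [Finset.card_univ, Fintype.card_fin]
      · congr 1
        rw [hDdef]
        trans (∑ i, (δ i * θ i) * n + ∑ i, δ i * ε * n + ∑ i, δ i * K₀)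
        · rw [← Finset.sum_add_distrib, ← Finset.sum_add_distrib]
          exact Finset.sum_congr rfl fun i _ => by ring
        · rw [← Finset.sum_mul, ← Finset.sum_mul, ← Finset.sum_mul, ← Finset.sum_mul]
          ring
    have hlogmain : Real.log (Nat.card {g : ∀ i, G i | H g ≠ 0 ∧ ‖H g‖ < (n : ℝ) ∧
        ‖(‖H g‖)⁻¹ • H g - θ‖ < ε}) ≤
        ((r : ℝ) * Real.log C + (∑ i, δ i) * K₀) + (D + ε * ∑ i, δ i) * n := by
      rcases Nat.eq_zero_or_pos (Nat.card {g : ∀ i, G i | H g ≠ 0 ∧ ‖H g‖ < (n : ℝ) ∧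
          ‖(‖H g‖)⁻¹ • H g - θ‖ < ε}) with h0 | hpos
      · rw [h0]
        simp only [Nat.cast_zero, Real.log_zero]
        have t1 : 0 ≤ (r:ℝ) * Real.log C := mul_nonneg (Nat.cast_nonneg r) hlogC
        have t2 : 0 ≤ (∑ i, δ i) * K₀ := mul_nonneg hsd.le hK₀
        have t3 : 0 ≤ (D + ε * ∑ i, δ i) * n := by
          apply mul_nonneg _ hn0.le
          nlinarith
        linarith
      · have hpos' : (0:ℝ) < Nat.card {g : ∀ i, G i | H g ≠ 0 ∧ ‖H g‖ < (n : ℝ) ∧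
            ‖(‖H g‖)⁻¹ • H g - θ‖ < ε} := by exact_mod_cast hpos
        have hchain : (Nat.card {g : ∀ i, G i | H g ≠ 0 ∧ ‖H g‖ < (n : ℝ) ∧
            ‖(‖H g‖)⁻¹ • H g - θ‖ < ε} : ℝ) ≤
            C ^ r * Real.exp ((D + ε * ∑ i, δ i) * n + (∑ i, δ i) * K₀) := by
          rw [← hprod]; exact le_trans hcard1 hcard2
        have hlog := Real.log_le_log hpos' hchain
        rw [Real.log_mul (by positivity) (Real.exp_ne_zero _), Real.log_pow,
          Real.log_exp] at hlog
        push_cast at hlog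
        linarith
    calc Real.log (Nat.card {g : ∀ i, G i | H g ≠ 0 ∧ ‖H g‖ < (n : ℝ) ∧
        ‖(‖H g‖)⁻¹ • H g - θ‖ < ε}) / (n : ℝ) ≤
        (((r : ℝ) * Real.log C + (∑ i, δ i) * K₀) + (D + ε * ∑ i, δ i) * n) / n := by
          exact div_le_div_of_nonneg_right hlogmain hn0.le
    _ = ((r : ℝ) * Real.log C + (∑ i, δ i) * K₀) / n + (D + ε * ∑ i, δ i) := by
          rw [add_div, mul_div_assoc, div_self hn0.ne', mul_one]
  -- lower bound
  have hlowerN : ∀ ε : ℝ, 0 < ε → ∀ᶠ n : ℕ in atTop,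
      D - (D * (Real.sqrt r + 1) + (r : ℝ) * Real.log C) / n ≤
      Real.log (Nat.card {g : ∀ i, G i | H g ≠ 0 ∧ ‖H g‖ < (n : ℝ) ∧
        ‖(‖H g‖)⁻¹ • H g - θ‖ < ε}) / (n : ℝ) := by
    intro ε hε
    set c : ℝ := Real.sqrt r + 1 with hcdef
    have hsqrt : 0 ≤ Real.sqrt r := Real.sqrt_nonneg _
    have hev1 : ∀ᶠ n : ℕ in atTop, ∀ i, 0 < θ i → max R₀ 1 ≤ θ i * ((n:ℝ) - c) := by
      rw [Filter.eventually_all]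
      intro i
      by_cases hi : 0 < θ i
      · have htend : Tendsto (fun n : ℕ => θ i * ((n:ℝ) - c)) atTop atTop := by
          apply Tendsto.const_mul_atTop hi
          have : Tendsto (fun n : ℕ => (n:ℝ) + (-c)) atTop atTop :=
            Filter.tendsto_atTop_add_const_right _ _ tendsto_natCast_atTop_atTop
          simpa [sub_eq_add_neg] using this
        filter_upwards [htend.eventually_ge_atTop (max R₀ 1)] with n hn
        intro _
        exact hn
      · filter_upwards with n hn'
        exact absurd hn' hi
    have hev2 : ∀ᶠ n : ℕ in atTop, 2 * Real.sqrt r < ε * (((n:ℝ) - c) - Real.sqrt r) := by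
      have htend : Tendsto (fun n : ℕ => ε * (((n:ℝ) - c) - Real.sqrt r)) atTop atTop := by
        apply Tendsto.const_mul_atTop hε
        have : Tendsto (fun n : ℕ => (n:ℝ) + (-c - Real.sqrt r)) atTop atTop :=
          Filter.tendsto_atTop_add_const_right _ _ tendsto_natCast_atTop_atTop
        simpa [sub_eq_add_neg, add_assoc] using this
      exact htend.eventually_gt_atTop _
    have hev3 : ∀ᶠ n : ℕ in atTop, (1:ℝ) ≤ (n:ℝ) := by
      filter_upwards [eventually_ge_atTop 1] with n hn
      exact_mod_cast hn
    filter_upwards [hev1, hev2, hev3] with n h1 h2 h3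
    set s : ℝ := (n:ℝ) - c with hsdef
    have hssr : 0 < s - Real.sqrt r := by
      by_contra h
      push_neg at h
      nlinarith [mul_nonpos_of_nonneg_of_nonpos hε.le h]
    have hs0 : 0 < s := by linarith
    set T : Set (∀ i, G i) := Set.univ.pi (fun i => if 0 < θ i then
      {g : G i | θ i * s - 1 ≤ dist (o i) (g • o i) ∧ dist (o i) (g • o i) < θ i * s}
      else {1}) with hTdef
    have hTfac : ∀ i, (1/C) * Real.exp (δ i * (θ i * s)) ≤
        (Nat.card ↥(if 0 < θ i then
          {g : G i | θ i * s - 1 ≤ dist (o i) (g • o i) ∧ dist (o i) (g • o i) < θ i * s}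
          else {1}) : ℝ) := by
      intro i
      by_cases hi : 0 < θ i
      · rw [if_pos hi]
        exact (hcount i (θ i * s) (le_trans (le_max_left R₀ 1) (h1 i hi))).1
      · rw [if_neg hi]
        have hθi : θ i = 0 := le_antisymm (not_lt.mp hi) (hθ0 i)
        have hone : Nat.card ↥({1} : Set (G i)) = 1 := Nat.card_unique
        rw [hθi, hone, zero_mul, mul_zero, Real.exp_zero, mul_one]
        push_cast
        rw [div_le_one hC]
        exact hC1
    have hTS : T ⊆ {g : ∀ i, G i | H g ≠ 0 ∧ ‖H g‖ < (n : ℝ) ∧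
        ‖(‖H g‖)⁻¹ • H g - θ‖ < ε} := by
      intro g hg
      rw [hTdef, Set.mem_univ_pi] at hg
      have hco : ∀ i, |H g i - s * θ i| ≤ 1 := by
        intro i
        have hgi := hg i
        by_cases hi : 0 < θ i
        · rw [if_pos hi] at hgi
          obtain ⟨ha, hb⟩ := hgi
          rw [hH g i, abs_le]
          have hcomm : s * θ i = θ i * s := mul_comm _ _
          constructor <;> [linarith [hcomm]; linarith [hcomm]]
        · rw [if_neg hi] at hgi
          have hθi : θ i = 0 := le_antisymm (not_lt.mp hi) (hθ0 i)
          have hg1 : g i = 1 := hgi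
          rw [hH g i, hg1, one_smul, dist_self, hθi, mul_zero]
          simp
      have hdiff : ‖H g - s • θ‖ ≤ Real.sqrt r := by
        rw [EuclideanSpace.norm_eq]
        have hsq : ∀ i : Fin r, ‖(H g - s • θ) i‖^2 ≤ 1 := by
          intro i
          have happ : (H g - s • θ) i = H g i - s * θ i := rfl
          rw [happ, Real.norm_eq_abs]
          calc |H g i - s * θ i|^2 ≤ 1^2 := by
                have := hco i
                have h0 := abs_nonneg (H g i - s * θ i)
                nlinarith
          _ = 1 := one_pow 2
        calc Real.sqrt (∑ i, ‖(H g - s • θ) i‖^2) ≤ Real.sqrt (∑ _i : Fin r, (1:ℝ)) :=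
              Real.sqrt_le_sqrt (Finset.sum_le_sum fun i _ => hsq i)
        _ = Real.sqrt r := by
              rw [Finset.sum_const, Finset.card_univ, Fintype.card_fin, nsmul_eq_mul, mul_one]
      have hsθ : ‖s • θ‖ = s := by
        rw [norm_smul, hθ, mul_one, Real.norm_eq_abs, abs_of_pos hs0]
      have hub : ‖H g‖ ≤ s + Real.sqrt r := by
        have h4 := norm_add_le (H g - s • θ) (s • θ)
        rw [sub_add_cancel, hsθ] at h4
        linarith
      have hlb : s - Real.sqrt r ≤ ‖H g‖ := by
        have h4 := norm_sub_norm_le (s • θ) (H g)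
        rw [hsθ, norm_sub_rev] at h4
        linarith
      have hgpos : 0 < ‖H g‖ := lt_of_lt_of_le hssr hlb
      refine ⟨norm_pos_iff.mp hgpos, ?_, ?_⟩
      · have heq1 : s + Real.sqrt r = (n:ℝ) - 1 := by
          rw [hsdef, hcdef]; ring
        linarith
      · have heq : (‖H g‖)⁻¹ • H g - θ = (‖H g‖)⁻¹ • (H g - ‖H g‖ • θ) := by
          rw [smul_sub, smul_smul, inv_mul_cancel₀ hgpos.ne', one_smul]
        rw [heq, norm_smul, Real.norm_eq_abs, abs_of_pos (inv_pos.mpr hgpos)]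
        have h5 : ‖H g - ‖H g‖ • θ‖ ≤ 2 * Real.sqrt r := by
          have hdecomp : H g - ‖H g‖ • θ = (H g - s • θ) + (s - ‖H g‖) • θ := by
            module
          rw [hdecomp]
          have h6 : ‖(s - ‖H g‖) • θ‖ = |s - ‖H g‖| := by
            rw [norm_smul, hθ, mul_one, Real.norm_eq_abs]
          have h7 : |s - ‖H g‖| ≤ Real.sqrt r := by
            rw [abs_le]; constructor <;> linarith
          calc ‖(H g - s • θ) + (s - ‖H g‖) • θ‖ ≤
              ‖H g - s • θ‖ + ‖(s - ‖H g‖) • θ‖ := norm_add_le _ _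
          _ ≤ Real.sqrt r + Real.sqrt r := by rw [h6]; linarith
          _ = 2 * Real.sqrt r := by ring
        have h8 : (‖H g‖)⁻¹ * ‖H g - ‖H g‖ • θ‖ ≤ (‖H g‖)⁻¹ * (2 * Real.sqrt r) :=
          mul_le_mul_of_nonneg_left h5 (inv_pos.mpr hgpos).le
        have h9 : (‖H g‖)⁻¹ * (2 * Real.sqrt r) < ε := by
          refine (inv_mul_lt_iff₀ hgpos).mpr ?_
          calc 2 * Real.sqrt r < ε * (s - Real.sqrt r) := h2
          _ ≤ ε * ‖H g‖ := mul_le_mul_of_nonneg_left hlb hε.le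
          _ = ‖H g‖ * ε := mul_comm _ _
        linarith
    have hTcard : (1/C)^r * Real.exp (D * s) ≤ (Nat.card ↥T : ℝ) := by
      have hcardT : (Nat.card ↥T : ℝ) = ∏ i, (Nat.card ↥(if 0 < θ i then
          {g : G i | θ i * s - 1 ≤ dist (o i) (g • o i) ∧ dist (o i) (g • o i) < θ i * s}
          else {1}) : ℝ) := by
        rw [hTdef, Nat.card_congr (Equiv.Set.univPi _), Nat.card_pi]
        push_cast; rfl
      rw [hcardT]
      calc (1/C)^r * Real.exp (D * s) = ∏ i, ((1/C) * Real.exp (δ i * (θ i * s))) := by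
            rw [Finset.prod_mul_distrib, Finset.prod_const, ← Real.exp_sum]
            congr 2
            · rw [Finset.card_univ, Fintype.card_fin]
            · rw [hDdef, Finset.sum_mul]
              exact Finset.sum_congr rfl fun i _ => by ring
      _ ≤ ∏ i, (Nat.card ↥(if 0 < θ i then
            {g : G i | θ i * s - 1 ≤ dist (o i) (g • o i) ∧ dist (o i) (g • o i) < θ i * s}
            else {1}) : ℝ) :=
          Finset.prod_le_prod (fun i _ => by positivity) (fun i _ => hTfac i)
    have hScard : (1/C)^r * Real.exp (D * s) ≤
        (Nat.card {g : ∀ i, G i | H g ≠ 0 ∧ ‖H g‖ < (n : ℝ) ∧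
          ‖(‖H g‖)⁻¹ • H g - θ‖ < ε} : ℝ) := by
      refine le_trans hTcard ?_
      exact_mod_cast Nat.card_mono (hSfin ε n) hTS
    have hexp_pos : (0:ℝ) < (1/C)^r * Real.exp (D * s) := by positivity
    have hlog := Real.log_le_log hexp_pos hScard
    rw [Real.log_mul (by positivity) (Real.exp_ne_zero _), Real.log_pow, Real.log_exp,
      one_div, Real.log_inv] at hlog
    have hn0 : (0:ℝ) < n := by linarith
    have hstep : (D * s - (r:ℝ) * Real.log C) / n ≤
        Real.log (Nat.card {g : ∀ i, G i | H g ≠ 0 ∧ ‖H g‖ < (n : ℝ) ∧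
          ‖(‖H g‖)⁻¹ • H g - θ‖ < ε}) / (n : ℝ) := by
      apply div_le_div_of_nonneg_right _ hn0.le
      linarith
    have heq2 : (D * s - (r:ℝ) * Real.log C) / n = D - (D * c + (r:ℝ) * Real.log C) / n := by
      rw [hsdef]
      field_simp
      ring
    rw [heq2] at hstep
    exact hstep
  -- limsup bounds
  have hFub : ∀ ε : ℝ, 0 < ε →
      limsup (fun n : ℕ => Real.log (Nat.card {g : ∀ i, G i | H g ≠ 0 ∧ ‖H g‖ < (n : ℝ) ∧
        ‖(‖H g‖)⁻¹ • H g - θ‖ < ε}) / (n : ℝ)) atTop ≤ D + ε * ∑ i, δ i := by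
    intro ε hε
    have hb : Tendsto (fun n : ℕ => ((r : ℝ) * Real.log C + (∑ i, δ i) * K₀) / n +
        (D + ε * ∑ i, δ i)) atTop (nhds (D + ε * ∑ i, δ i)) := by
      have := (tendsto_const_div_atTop_nhds_zero_nat ((r : ℝ) * Real.log C +
        (∑ i, δ i) * K₀)).add_const (D + ε * ∑ i, δ i)
      simpa using this
    have hev : (fun n : ℕ => Real.log (Nat.card {g : ∀ i, G i | H g ≠ 0 ∧ ‖H g‖ < (n : ℝ) ∧
        ‖(‖H g‖)⁻¹ • H g - θ‖ < ε}) / (n : ℝ)) ≤ᶠ[atTop]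
        fun n : ℕ => ((r : ℝ) * Real.log C + (∑ i, δ i) * K₀) / n + (D + ε * ∑ i, δ i) := by
      filter_upwards [eventually_ge_atTop 1] with n hn
      exact hupper ε hε n hn
    have hcob : IsCoboundedUnder (· ≤ ·) atTop
        (fun n : ℕ => Real.log (Nat.card {g : ∀ i, G i | H g ≠ 0 ∧ ‖H g‖ < (n : ℝ) ∧
          ‖(‖H g‖)⁻¹ • H g - θ‖ < ε}) / (n : ℝ)) := by
      apply Filter.IsCoboundedUnder.of_frequently_ge (a := D - 1)
      apply Filter.Eventually.frequently
      have h2 : ∀ᶠ n : ℕ in atTop,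
          (D * (Real.sqrt r + 1) + (r : ℝ) * Real.log C) / n ≤ 1 := by
        have ht := tendsto_const_div_atTop_nhds_zero_nat
          (D * (Real.sqrt r + 1) + (r : ℝ) * Real.log C)
        exact ht.eventually_le_const (by norm_num)
      filter_upwards [hlowerN ε hε, h2] with n ha hb2
      linarith
    calc limsup (fun n : ℕ => Real.log (Nat.card {g : ∀ i, G i | H g ≠ 0 ∧ ‖H g‖ < (n : ℝ) ∧
          ‖(‖H g‖)⁻¹ • H g - θ‖ < ε}) / (n : ℝ)) atTop ≤
        limsup (fun n : ℕ => ((r : ℝ) * Real.log C + (∑ i, δ i) * K₀) / n +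
          (D + ε * ∑ i, δ i)) atTop := limsup_le_limsup hev hcob hb.isBoundedUnder_le
    _ = D + ε * ∑ i, δ i := hb.limsup_eq
  have hFlb : ∀ ε : ℝ, 0 < ε →
      D ≤ limsup (fun n : ℕ => Real.log (Nat.card {g : ∀ i, G i | H g ≠ 0 ∧ ‖H g‖ < (n : ℝ) ∧
        ‖(‖H g‖)⁻¹ • H g - θ‖ < ε}) / (n : ℝ)) atTop := by
    intro ε hε
    have ha : Tendsto (fun n : ℕ => D - (D * (Real.sqrt r + 1) + (r : ℝ) * Real.log C) / n)
        atTop (nhds D) := by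
      have ht := tendsto_const_div_atTop_nhds_zero_nat
        (D * (Real.sqrt r + 1) + (r : ℝ) * Real.log C)
      have hconst : Tendsto (fun _ : ℕ => D) atTop (nhds D) := tendsto_const_nhds
      have := hconst.sub ht
      simpa using this
    have hbdd : IsBoundedUnder (· ≤ ·) atTop
        (fun n : ℕ => Real.log (Nat.card {g : ∀ i, G i | H g ≠ 0 ∧ ‖H g‖ < (n : ℝ) ∧
          ‖(‖H g‖)⁻¹ • H g - θ‖ < ε}) / (n : ℝ)) := by
      apply Filter.isBoundedUnder_of_eventually_le
        (a := ((r : ℝ) * Real.log C + (∑ i, δ i) * K₀) + (D + ε * ∑ i, δ i))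
      filter_upwards [eventually_ge_atTop 1] with n hn
      have h1 := hupper ε hε n hn
      have hn1 : (1:ℝ) ≤ n := by exact_mod_cast hn
      have h2 : ((r : ℝ) * Real.log C + (∑ i, δ i) * K₀) / n ≤
          (r : ℝ) * Real.log C + (∑ i, δ i) * K₀ := by
        apply div_le_self _ hn1
        have t1 : 0 ≤ (r:ℝ) * Real.log C := mul_nonneg (Nat.cast_nonneg r) hlogC
        have t2 : 0 ≤ (∑ i, δ i) * K₀ := mul_nonneg hsd.le hK₀
        linarith
      linarith
    have hcoba : IsCoboundedUnder (· ≤ ·) atTop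
        (fun n : ℕ => D - (D * (Real.sqrt r + 1) + (r : ℝ) * Real.log C) / n) := by
      apply Filter.IsCoboundedUnder.of_frequently_ge (a := D - 1)
      apply Filter.Eventually.frequently
      exact ha.eventually (eventually_ge_nhds (by linarith))
    calc D = limsup (fun n : ℕ =>
        D - (D * (Real.sqrt r + 1) + (r : ℝ) * Real.log C) / n) atTop := ha.limsup_eq.symm
    _ ≤ limsup (fun n : ℕ => Real.log (Nat.card {g : ∀ i, G i | H g ≠ 0 ∧ ‖H g‖ < (n : ℝ) ∧
          ‖(‖H g‖)⁻¹ • H g - θ‖ < ε}) / (n : ℝ)) atTop :=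
        limsup_le_limsup (hlowerN ε hε) hcoba hbdd
  -- squeeze
  have hsq1 : Tendsto (fun _ : ℝ => D) (nhdsWithin 0 (Set.Ioi 0)) (nhds D) :=
    tendsto_const_nhds
  have hsq2 : Tendsto (fun ε : ℝ => D + ε * ∑ i, δ i) (nhdsWithin 0 (Set.Ioi 0)) (nhds D) := by
    have hcont : Tendsto (fun ε : ℝ => D + ε * ∑ i, δ i) (nhds 0) (nhds D) := by
      have h : Continuous (fun ε : ℝ => D + ε * ∑ i, δ i) := by fun_prop
      have h2 := h.tendsto 0
      simpa using h2
    exact hcont.mono_left nhdsWithin_le_nhds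
  have hsq3 : ∀ᶠ ε : ℝ in nhdsWithin 0 (Set.Ioi 0), D ≤
      limsup (fun n : ℕ => Real.log (Nat.card {g : ∀ i, G i | H g ≠ 0 ∧ ‖H g‖ < (n : ℝ) ∧
        ‖(‖H g‖)⁻¹ • H g - θ‖ < ε}) / (n : ℝ)) atTop := by
    filter_upwards [self_mem_nhdsWithin] with ε hε
    exact hFlb ε hε
  have hsq4 : ∀ᶠ ε : ℝ in nhdsWithin 0 (Set.Ioi 0),
      limsup (fun n : ℕ => Real.log (Nat.card {g : ∀ i, G i | H g ≠ 0 ∧ ‖H g‖ < (n : ℝ) ∧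
        ‖(‖H g‖)⁻¹ • H g - θ‖ < ε}) / (n : ℝ)) atTop ≤ D + ε * ∑ i, δ i := by
    filter_upwards [self_mem_nhdsWithin] with ε hε
    exact hFub ε hε
  exact tendsto_of_tendsto_of_tendsto_of_le_of_le' hsq1 hsq2 hsq3 hsq4
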